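/- The Barenblatt-type profile solves the porous media equation with Darcy's law: For every t ≥ 0 and every x ∈ ℝⁿ with |x| < ν(t)√(Ā/B̄), the functions ρ̄(t,x) = ν(t)^{−n} (Ā − B̄ ν(t)^{−2}|x|²)^{1/(γ−1)} and ū(t,x) = κ x/(1+t) satisfy: (i) ∂_t ρ̄(t,x) = (1+t)^λ Δ_x (ρ̄^γ)(t,x), and (ii) ∇_x (ρ̄^γ)(t,x) = −(1+t)^{−λ} ρ̄(t,x) ū(t,x). -/

import Mathlib

open Real

noncomputable section

lemma hasFDerivAt_Qrpow {n : ℕ} (b Ab q : ℝ) (z : EuclideanSpace ℝ (Fin n))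
    (hz : Ab - b * ‖z‖ ^ 2 ≠ 0) :
    HasFDerivAt (fun w : EuclideanSpace ℝ (Fin n) => (Ab - b * ‖w‖ ^ 2) ^ q)
      ((q * (Ab - b * ‖z‖ ^ 2) ^ (q - 1) * (-b * 2)) • (innerSL ℝ z)) z := by
  have h0 : HasFDerivAt (fun w : EuclideanSpace ℝ (Fin n) => ‖w‖ ^ 2)
      (2 • (innerSL ℝ z)) z := (hasStrictFDerivAt_norm_sq z).hasFDerivAt
  have h1 : HasFDerivAt (fun w : EuclideanSpace ℝ (Fin n) => Ab - b * ‖w‖ ^ 2)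
      (-(b • (2 • (innerSL ℝ z)))) z := (h0.const_mul b).const_sub Ab
  have h2 := h1.rpow_const (p := q) (Or.inl hz)
  refine h2.congr_fderiv ?_
  ext w
  simp [smul_smul]
  ring

lemma innerSL_single {n : ℕ} (z : EuclideanSpace ℝ (Fin n)) (k : Fin n) :
    (innerSL ℝ z) (EuclideanSpace.single k (1:ℝ)) = z k := by
  simp [EuclideanSpace.inner_single_right]

lemma L1 {n : ℕ} (a b Ab γ : ℝ) (ha : 0 < a) (hγ : 1 < γ)
    (z : EuclideanSpace ℝ (Fin n)) (hz : 0 < Ab - b * ‖z‖ ^ 2) :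
    fderiv ℝ (fun w : EuclideanSpace ℝ (Fin n) =>
        (a * (Ab - b * ‖w‖ ^ 2) ^ (1 / (γ - 1))) ^ γ) z
      = ((a ^ γ * (-2 * b * γ / (γ - 1))) * (Ab - b * ‖z‖ ^ 2) ^ (1 / (γ - 1)))
          • (innerSL ℝ z) := by
  have hγ1 : (0:ℝ) < γ - 1 := by linarith
  have hopen : IsOpen {w : EuclideanSpace ℝ (Fin n) | 0 < Ab - b * ‖w‖ ^ 2} :=
    isOpen_lt continuous_const (by fun_prop)
  have hev : (fun w : EuclideanSpace ℝ (Fin n) =>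
        (a * (Ab - b * ‖w‖ ^ 2) ^ (1 / (γ - 1))) ^ γ) =ᶠ[nhds z]
      (fun w => a ^ γ * (Ab - b * ‖w‖ ^ 2) ^ ((1 / (γ - 1)) * γ)) := by
    filter_upwards [hopen.mem_nhds hz] with w hw
    have hw' : (0:ℝ) < Ab - b * ‖w‖ ^ 2 := hw
    rw [Real.mul_rpow ha.le (Real.rpow_nonneg hw'.le _), ← Real.rpow_mul hw'.le]
  have hQd := hasFDerivAt_Qrpow (n := n) b Ab ((1 / (γ - 1)) * γ) z hz.ne'
  have hF := hQd.const_mul (a ^ γ)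
  rw [hev.fderiv_eq, hF.fderiv, smul_smul]
  congr 1
  have h1 : (1 / (γ - 1)) * γ - 1 = 1 / (γ - 1) := by field_simp; ring
  rw [h1]
  ring

lemma L2 {n : ℕ} (a b Ab γ : ℝ) (ha : 0 < a) (hγ : 1 < γ)
    (x : EuclideanSpace ℝ (Fin n)) (hx : 0 < Ab - b * ‖x‖ ^ 2) (k : Fin n) :
    fderiv ℝ (fun z => fderiv ℝ (fun w : EuclideanSpace ℝ (Fin n) =>
        (a * (Ab - b * ‖w‖ ^ 2) ^ (1 / (γ - 1))) ^ γ) z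
        (EuclideanSpace.single k 1)) x (EuclideanSpace.single k 1)
      = (a ^ γ * (-2 * b * γ / (γ - 1))) *
          ((Ab - b * ‖x‖ ^ 2) ^ (1 / (γ - 1))
            + (1 / (γ - 1)) * (Ab - b * ‖x‖ ^ 2) ^ (1 / (γ - 1) - 1) * (-2 * b) * (x k) ^ 2) := by
  have hγ1 : (0:ℝ) < γ - 1 := by linarith
  have hopen : IsOpen {w : EuclideanSpace ℝ (Fin n) | 0 < Ab - b * ‖w‖ ^ 2} :=
    isOpen_lt continuous_const (by fun_prop)
  have hev2 : (fun z => fderiv ℝ (fun w : EuclideanSpace ℝ (Fin n) =>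
        (a * (Ab - b * ‖w‖ ^ 2) ^ (1 / (γ - 1))) ^ γ) z (EuclideanSpace.single k 1))
      =ᶠ[nhds x]
      (fun z => ((a ^ γ * (-2 * b * γ / (γ - 1))) * (Ab - b * ‖z‖ ^ 2) ^ (1 / (γ - 1))) * z k) := by
    filter_upwards [hopen.mem_nhds hx] with w hw
    have hw' : (0:ℝ) < Ab - b * ‖w‖ ^ 2 := hw
    rw [L1 a b Ab γ ha hγ w hw']
    simp [innerSL_single]
  rw [hev2.fderiv_eq]
  have hQd := (hasFDerivAt_Qrpow (n := n) b Ab (1 / (γ - 1)) x hx.ne').const_mul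
      (a ^ γ * (-2 * b * γ / (γ - 1)))
  have hproj : HasFDerivAt (fun z : EuclideanSpace ℝ (Fin n) => z k)
      (EuclideanSpace.proj k : EuclideanSpace ℝ (Fin n) →L[ℝ] ℝ) x :=
    (EuclideanSpace.proj k : EuclideanSpace ℝ (Fin n) →L[ℝ] ℝ).hasFDerivAt
  have hg := hQd.mul hproj
  rw [(show HasFDerivAt (fun z : EuclideanSpace ℝ (Fin n) => a ^ γ * (-2 * b * γ / (γ - 1)) *
      (Ab - b * ‖z‖ ^ 2) ^ (1 / (γ - 1)) * z k) _ x from hg).fderiv]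
  simp [innerSL_single, smul_smul, EuclideanSpace.single_apply]
  ring


/-- κ = (1+λ)/(nγ−n+2) -/
def kpp (n : ℕ) (γ lam : ℝ) : ℝ := (1 + lam) / ((n : ℝ) * γ - (n : ℝ) + 2)

/-- B̄ = (γ−1)κ/(2γ) -/
def Bbar (n : ℕ) (γ lam : ℝ) : ℝ := (γ - 1) * kpp n γ lam / (2 * γ)

/-- the Barenblatt-type density ρ̄(t,x) = ν(t)^{−n}(Ā − B̄ ν(t)^{−2}|x|²)^{1/(γ−1)},
with ν(t) = (1+t)^κ. -/
def rhobar (n : ℕ) (γ lam Ab : ℝ) (t : ℝ) (x : EuclideanSpace ℝ (Fin n)) : ℝ :=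
  (1 + t) ^ (-(n : ℝ) * kpp n γ lam) *
    (Ab - Bbar n γ lam * (1 + t) ^ (-2 * kpp n γ lam) * ‖x‖ ^ 2) ^ (1 / (γ - 1))

/-- **The Barenblatt-type profile solves the porous media equation with Darcy's law**:
at every t ≥ 0 and interior point |x| < ν(t)√(Ā/B̄),
(i) ∂_t ρ̄ = (1+t)^λ Δ_x(ρ̄^γ) and (ii) ∇_x(ρ̄^γ) = −(1+t)^{−λ} ρ̄ ū
with ū(t,x) = κx/(1+t). -/
theorem barenblatt_solves_porous_media
    (n : ℕ) (hn : 1 ≤ n) (γ lam Ab : ℝ)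
    (hγ : 1 < γ) (hlam0 : 0 ≤ lam) (hlam1 : lam < 1) (hA : 0 < Ab) :
    ∀ t : ℝ, 0 ≤ t → ∀ x : EuclideanSpace ℝ (Fin n),
      ‖x‖ < (1 + t) ^ kpp n γ lam * Real.sqrt (Ab / Bbar n γ lam) →
      (deriv (fun s => rhobar n γ lam Ab s x) t
          = (1 + t) ^ lam *
              ∑ k : Fin n,
                fderiv ℝ
                  (fun z =>
                    fderiv ℝ (fun w => rhobar n γ lam Ab t w ^ γ) z
                      (EuclideanSpace.single k 1))
                  x (EuclideanSpace.single k 1)) ∧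
      ∀ k : Fin n,
        fderiv ℝ (fun z => rhobar n γ lam Ab t z ^ γ) x (EuclideanSpace.single k 1)
          = -((1 + t) ^ (-lam)) * rhobar n γ lam Ab t x
              * (kpp n γ lam * x k / (1 + t)) := by
  intro t ht x hx
  have hγ1 : (0:ℝ) < γ - 1 := by linarith
  have hd : (0:ℝ) < (n:ℝ) * γ - (n:ℝ) + 2 := by
    have h0 : (0:ℝ) ≤ (n:ℝ) := n.cast_nonneg
    nlinarith
  have hκ : 0 < kpp n γ lam := div_pos (by linarith) hd
  have hB : 0 < Bbar n γ lam := by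
    have h : Bbar n γ lam = (γ - 1) * kpp n γ lam / (2 * γ) := rfl
    rw [h]; positivity
  have hκd : kpp n γ lam * ((n:ℝ) * γ - (n:ℝ) + 2) = 1 + lam := div_mul_cancel₀ _ hd.ne'
  have h2B : 2 * Bbar n γ lam * γ = (γ - 1) * kpp n γ lam := by
    have h : Bbar n γ lam = (γ - 1) * kpp n γ lam / (2 * γ) := rfl
    rw [h]; field_simp
  have hs : (0:ℝ) < 1 + t := by linarith
  simp only [rhobar]
  set κ := kpp n γ lam
  set B := Bbar n γ lam
  -- positivity of the pressure-like quantity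
  have hQpos : 0 < Ab - B * (1 + t) ^ (-2 * κ) * ‖x‖ ^ 2 := by
    have hsq : ‖x‖ ^ 2 < ((1 + t) ^ κ) ^ 2 * (Ab / B) := by
      have h := mul_self_lt_mul_self (norm_nonneg x) hx
      calc ‖x‖ ^ 2 = ‖x‖ * ‖x‖ := sq ‖x‖
        _ < ((1 + t) ^ κ * Real.sqrt (Ab / B)) * ((1 + t) ^ κ * Real.sqrt (Ab / B)) := h
        _ = ((1 + t) ^ κ) ^ 2 * (Real.sqrt (Ab / B) * Real.sqrt (Ab / B)) := by ring
        _ = ((1 + t) ^ κ) ^ 2 * (Ab / B) := by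
            rw [Real.mul_self_sqrt (by positivity)]
    have h2 : B * (1 + t) ^ (-2 * κ) * ‖x‖ ^ 2
        < B * (1 + t) ^ (-2 * κ) * (((1 + t) ^ κ) ^ 2 * (Ab / B)) :=
      mul_lt_mul_of_pos_left hsq (by positivity)
    have hone : (1 + t) ^ (-2 * κ) * ((1 + t) ^ κ * (1 + t) ^ κ) = 1 := by
      rw [← Real.rpow_add hs, ← Real.rpow_add hs,
        show -2 * κ + (κ + κ) = 0 by ring, Real.rpow_zero]
    have h5 : B * (1 + t) ^ (-2 * κ) * (((1 + t) ^ κ) ^ 2 * (Ab / B)) = Ab := by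
      calc B * (1 + t) ^ (-2 * κ) * (((1 + t) ^ κ) ^ 2 * (Ab / B))
          = ((1 + t) ^ (-2 * κ) * ((1 + t) ^ κ * (1 + t) ^ κ)) * (B * (Ab / B)) := by
            rw [sq]; ring
        _ = Ab := by rw [hone, one_mul, mul_div_cancel₀ Ab hB.ne']
    linarith [h2, h5.le]
  have hapos : (0:ℝ) < (1 + t) ^ (-(n:ℝ) * κ) := by positivity
  have hcomb : ∀ u v : ℝ, (1 + t) ^ u * (1 + t) ^ v = (1 + t) ^ (u + v) :=
    fun u v => (Real.rpow_add hs u v).symm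
  have ha : ((1 + t) ^ (-(n:ℝ) * κ)) ^ γ = (1 + t) ^ (-(n:ℝ) * κ * γ) :=
    (Real.rpow_mul hs.le (-(n:ℝ) * κ) γ).symm
  have hκB : 2 * B * γ / (γ - 1) = κ := by
    field_simp
    linear_combination h2B
  have hkey : (1 + t) ^ (-(n:ℝ) * κ * γ) * (1 + t) ^ (-2 * κ)
      = (1 + t) ^ (-lam) * (1 + t) ^ (-(n:ℝ) * κ) * (1 + t) ^ (-1 : ℝ) := by
    rw [hcomb, hcomb, hcomb]
    congr 1
    linear_combination -hκd
  have hcoeff : ((1 + t) ^ (-(n:ℝ) * κ)) ^ γ * (-2 * (B * (1 + t) ^ (-2 * κ)) * γ / (γ - 1))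
      = -((1 + t) ^ (-lam)) * ((1 + t) ^ (-(n:ℝ) * κ)) * (κ / (1 + t)) := by
    rw [ha]
    calc (1 + t) ^ (-(n:ℝ) * κ * γ) * (-2 * (B * (1 + t) ^ (-2 * κ)) * γ / (γ - 1))
        = ((1 + t) ^ (-(n:ℝ) * κ * γ) * (1 + t) ^ (-2 * κ)) * (-(2 * B * γ / (γ - 1))) := by
          ring
      _ = ((1 + t) ^ (-lam) * (1 + t) ^ (-(n:ℝ) * κ) * (1 + t) ^ (-1 : ℝ)) * (-κ) := by
          rw [hkey, hκB]
      _ = -((1 + t) ^ (-lam)) * ((1 + t) ^ (-(n:ℝ) * κ)) * (κ / (1 + t)) := by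
          rw [Real.rpow_neg_one]; ring
  constructor
  · -- part (i)
    have hnormsq : ∑ k : Fin n, (x k) ^ 2 = ‖x‖ ^ 2 := by
      rw [EuclideanSpace.norm_eq, Real.sq_sqrt (by positivity)]
      simp [Real.norm_eq_abs, sq_abs]
    have hb' : HasDerivAt (fun s' : ℝ => 1 + s') 1 t := by
      simpa using (hasDerivAt_id t).const_add (1:ℝ)
    have h1 := hb'.rpow_const (p := -(n:ℝ) * κ) (Or.inl hs.ne')
    have h2 := hb'.rpow_const (p := -2 * κ) (Or.inl hs.ne')
    have h3 := ((h2.const_mul B).mul_const (‖x‖ ^ 2)).const_sub Ab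
    have h4 := h3.rpow_const (p := 1 / (γ - 1)) (Or.inl hQpos.ne')
    have hT : HasDerivAt (fun s' : ℝ => (1 + s') ^ (-(n:ℝ) * κ) *
        (Ab - B * (1 + s') ^ (-2 * κ) * ‖x‖ ^ 2) ^ (1 / (γ - 1)))
        (-(n:ℝ) * κ * (1 + t) ^ (-(n:ℝ) * κ - 1) *
           (Ab - B * (1 + t) ^ (-2 * κ) * ‖x‖ ^ 2) ^ (1 / (γ - 1))
         + (1 + t) ^ (-(n:ℝ) * κ) *
           ((1 / (γ - 1)) * (Ab - B * (1 + t) ^ (-2 * κ) * ‖x‖ ^ 2) ^ (1 / (γ - 1) - 1) *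
             (2 * κ * B * (1 + t) ^ (-2 * κ - 1) * ‖x‖ ^ 2))) t := by
      refine (h1.mul h4).congr_deriv ?_
      ring
    rw [hT.deriv]
    rw [Finset.sum_congr rfl (fun k _ => L2 ((1 + t) ^ (-(n:ℝ) * κ))
      (B * (1 + t) ^ (-2 * κ)) Ab γ hapos hγ x hQpos k)]
    rw [← Finset.mul_sum, Finset.sum_add_distrib, Finset.sum_const, Finset.card_univ,
      Fintype.card_fin, nsmul_eq_mul, ← Finset.mul_sum, hnormsq]
    rw [ha]
    have hE1 : (1 + t) ^ lam * ((1 + t) ^ (-(n:ℝ) * κ * γ) * (1 + t) ^ (-2 * κ))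
        = (1 + t) ^ (-(n:ℝ) * κ - 1) := by
      rw [hcomb, hcomb]; congr 1; linear_combination -hκd
    have hE2 : (1 + t) ^ lam * ((1 + t) ^ (-(n:ℝ) * κ * γ) * (1 + t) ^ (-2 * κ))
          * (1 + t) ^ (-2 * κ)
        = (1 + t) ^ (-(n:ℝ) * κ) * (1 + t) ^ (-2 * κ - 1) := by
      rw [hcomb, hcomb, hcomb, hcomb]; congr 1; linear_combination -hκd
    linear_combination
      ((n:ℝ) * κ * (Ab - B * (1 + t) ^ (-2 * κ) * ‖x‖ ^ 2) ^ (1 / (γ - 1))) * hE1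
      - (2 * B * (1 / (γ - 1)) * κ *
          (Ab - B * (1 + t) ^ (-2 * κ) * ‖x‖ ^ 2) ^ (1 / (γ - 1) - 1) * ‖x‖ ^ 2) * hE2
      + ((n:ℝ) * (Ab - B * (1 + t) ^ (-2 * κ) * ‖x‖ ^ 2) ^ (1 / (γ - 1)) *
            ((1 + t) ^ lam * ((1 + t) ^ (-(n:ℝ) * κ * γ) * (1 + t) ^ (-2 * κ)))
         - 2 * B * (1 / (γ - 1)) *
            (Ab - B * (1 + t) ^ (-2 * κ) * ‖x‖ ^ 2) ^ (1 / (γ - 1) - 1) * ‖x‖ ^ 2 *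
            ((1 + t) ^ lam * ((1 + t) ^ (-(n:ℝ) * κ * γ) * (1 + t) ^ (-2 * κ))
              * (1 + t) ^ (-2 * κ))) * hκB
  · -- part (ii)
    intro k
    rw [L1 ((1 + t) ^ (-(n:ℝ) * κ)) (B * (1 + t) ^ (-2 * κ)) Ab γ hapos hγ x hQpos]
    rw [ContinuousLinearMap.smul_apply, innerSL_single, smul_eq_mul]
    linear_combination ((Ab - B * (1 + t) ^ (-2 * κ) * ‖x‖ ^ 2) ^ (1 / (γ - 1)) * x k) * hcoeff
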